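/- Let A ⊆ ℝ^q be a nonempty compact set equal to the closure of its interior. Let λ be a finite Borel measure on ℝ^q such that λ(U ∩ int A) > 0 for every open set U ⊆ ℝ^q with U ∩ int A ≠ ∅. Let φ : ℝ^q → ℝ be continuous and let a ∈ A satisfy ∫_A max(φ(a') − φ(a), 0) dλ(a') = 0. Then φ(a') ≤ φ(a) for every a' ∈ A, i.e. φ(a) = max_{A} φ. If in addition a belongs to the interior of A and φ is Fréchet differentiable at a, then Dφ(a) = 0. -/

import Mathlib

open Filter Topology MeasureTheory

/-- Let `A ⊆ ℝ^q` be a nonempty compact set equal to the closure of its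
interior and `λ` a finite Borel measure charging every nonempty open subset of `int A`.
If `φ` is continuous, `a ∈ A` and `∫_A (φ(a') − φ(a))⁺ dλ(a') = 0`, then `φ(a) = max_A φ`;
and if moreover `a ∈ int A` and `φ` is differentiable at `a`, then `Dφ(a) = 0`. -/
theorem stmt_13 (q : ℕ) (A : Set (EuclideanSpace ℝ (Fin q)))
    (hAc : IsCompact A) (hAne : A.Nonempty) (hAcl : A = closure (interior A))
    (μ : Measure (EuclideanSpace ℝ (Fin q))) [IsFiniteMeasure μ]
    (hμ : ∀ U : Set (EuclideanSpace ℝ (Fin q)), IsOpen U →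
      (U ∩ interior A).Nonempty → 0 < μ (U ∩ interior A))
    (φ : EuclideanSpace ℝ (Fin q) → ℝ) (hφ : Continuous φ)
    (a : EuclideanSpace ℝ (Fin q)) (ha : a ∈ A)
    (hint : ∫ a' in A, max (φ a' - φ a) 0 ∂μ = 0) :
    (∀ a' ∈ A, φ a' ≤ φ a) ∧
    (a ∈ interior A → DifferentiableAt ℝ φ a → fderiv ℝ φ a = 0) := by
  set f : EuclideanSpace ℝ (Fin q) → ℝ := fun x => max (φ x - φ a) 0 with hf
  have hfc : Continuous f := (hφ.sub continuous_const).max continuous_const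
  have hfi : IntegrableOn f A μ := hfc.continuousOn.integrableOn_compact hAc
  have hnn : 0 ≤ᵐ[μ.restrict A] f :=
    Filter.Eventually.of_forall fun x => le_max_right _ _
  have hae : f =ᵐ[μ.restrict A] 0 :=
    (integral_eq_zero_iff_of_nonneg_ae hnn hfi).mp hint
  have hmax : ∀ a' ∈ A, φ a' ≤ φ a := by
    intro a' ha'
    by_contra h
    push_neg at h
    set U : Set (EuclideanSpace ℝ (Fin q)) := {x | φ a < φ x} with hU
    have hUopen : IsOpen U := isOpen_lt continuous_const hφ
    have hUne : (U ∩ interior A).Nonempty := by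
      have ha'cl : a' ∈ closure (interior A) := hAcl ▸ ha'
      rcases mem_closure_iff.mp ha'cl U hUopen h with ⟨x, hxU, hxA⟩
      exact ⟨x, hxU, hxA⟩
    have hpos := hμ U hUopen hUne
    have hzero : μ.restrict A {x | f x ≠ 0} = 0 := by
      have := hae
      rw [Filter.EventuallyEq, ae_iff] at this
      simpa using this
    have hsub : U ∩ interior A ⊆ {x | f x ≠ 0} ∩ A := by
      rintro x ⟨hxU, hxA⟩
      refine ⟨?_, interior_subset hxA⟩
      simp only [Set.mem_setOf_eq, hf]
      have : 0 < φ x - φ a := sub_pos.mpr hxU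
      simp [max_eq_left this.le]
      linarith
    have hAmeas : MeasurableSet A := hAc.isClosed.measurableSet
    have : μ ({x | f x ≠ 0} ∩ A) = 0 := by
      rw [Measure.restrict_apply] at hzero
      · exact hzero
      · exact (measurableSet_eq_fun hfc.measurable measurable_const).compl
    have hle : μ (U ∩ interior A) ≤ μ ({x | f x ≠ 0} ∩ A) := measure_mono hsub
    rw [this] at hle
    exact absurd (le_antisymm hle zero_le) hpos.ne'
  refine ⟨hmax, fun hia hdiff => ?_⟩
  have hloc : IsLocalMax φ a := by
    filter_upwards [isOpen_interior.mem_nhds hia] with x hx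
    exact hmax x (interior_subset hx)
  exact hloc.fderiv_eq_zero
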